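/- arXiv:2501.15887 — 4 statements merged into one kernel-verified Lean document; each statement's English description precedes it below -/
import Mathlib

section
/- Under the stated assumptions, ℓ(u₂) − ℓ(u₁) = B₂(u₁ − u₂, u₁ − u₂) + B₁(u₁,u₁) − B₂(u₁,u₁). In particular, ℓ(u₂) − ℓ(u₁) ≥ B₁(u₁,u₁) − B₂(u₁,u₁). -/
/-- Under the stated assumptions (Lax–Milgram solutions `u₁, u₂` of two symmetric,
bounded, coercive bilinear forms `B₁, B₂` with the same right-hand side `ℓ`),
`ℓ(u₂) − ℓ(u₁) = B₂(u₁ − u₂, u₁ − u₂) + B₁(u₁,u₁) − B₂(u₁,u₁)`, and in particular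
`ℓ(u₂) − ℓ(u₁) ≥ B₁(u₁,u₁) − B₂(u₁,u₁)`. -/
theorem stmt_0
    {H : Type*} [NormedAddCommGroup H] [InnerProductSpace ℝ H] [CompleteSpace H]
    (B₁ B₂ : H →L[ℝ] H →L[ℝ] ℝ)
    (hsym₁ : ∀ x y : H, B₁ x y = B₁ y x)
    (hsym₂ : ∀ x y : H, B₂ x y = B₂ y x)
    (c₁ c₂ : ℝ) (hc₁ : 0 < c₁) (hc₂ : 0 < c₂)
    (hcoer₁ : ∀ x : H, B₁ x x ≥ c₁ * ‖x‖ ^ 2)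
    (hcoer₂ : ∀ x : H, B₂ x x ≥ c₂ * ‖x‖ ^ 2)
    (ℓ : H →L[ℝ] ℝ) (u₁ u₂ : H)
    (h₁ : ∀ w : H, B₁ u₁ w = ℓ w)
    (h₂ : ∀ w : H, B₂ u₂ w = ℓ w) :
    ℓ u₂ - ℓ u₁ = B₂ (u₁ - u₂) (u₁ - u₂) + B₁ u₁ u₁ - B₂ u₁ u₁ ∧
    ℓ u₂ - ℓ u₁ ≥ B₁ u₁ u₁ - B₂ u₁ u₁ := by
  have key : ℓ u₂ - ℓ u₁ = B₂ (u₁ - u₂) (u₁ - u₂) + B₁ u₁ u₁ - B₂ u₁ u₁ := by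
    have e1 : B₂ (u₁ - u₂) (u₁ - u₂)
        = B₂ u₁ u₁ - B₂ u₁ u₂ - B₂ u₂ u₁ + B₂ u₂ u₂ := by
      simp [map_sub, ContinuousLinearMap.sub_apply]; ring
    rw [e1, hsym₂ u₁ u₂, h₂ u₁, h₂ u₂, h₁ u₁]
    ring
  refine ⟨key, ?_⟩
  have hpos : B₂ (u₁ - u₂) (u₁ - u₂) ≥ 0 :=
    le_trans (by positivity) (hcoer₂ (u₁ - u₂))
  linarith
end

section
/- If in addition B₁(v,v) ≤ B₂(v,v) for all v ∈ H, then ℓ(u₂) ≤ ℓ(u₁). (This is the abstract form of the Loewner monotonicity σ₁ ≤ σ₂ ⟹ Λ(σ₁) ⪰ Λ(σ₂) of the Neumann-to-Dirichlet map.) -/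
/-- If in addition `B₁(v,v) ≤ B₂(v,v)` for all `v ∈ H`, then `ℓ(u₂) ≤ ℓ(u₁)`.
(Abstract form of the Loewner monotonicity `σ₁ ≤ σ₂ ⟹ Λ(σ₁) ⪰ Λ(σ₂)` of the
Neumann-to-Dirichlet map.) -/
theorem stmt_1
    {H : Type*} [NormedAddCommGroup H] [InnerProductSpace ℝ H] [CompleteSpace H]
    (B₁ B₂ : H →L[ℝ] H →L[ℝ] ℝ)
    (hsym₁ : ∀ x y : H, B₁ x y = B₁ y x)
    (hsym₂ : ∀ x y : H, B₂ x y = B₂ y x)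
    (c₁ c₂ : ℝ) (hc₁ : 0 < c₁) (hc₂ : 0 < c₂)
    (hcoer₁ : ∀ x : H, B₁ x x ≥ c₁ * ‖x‖ ^ 2)
    (hcoer₂ : ∀ x : H, B₂ x x ≥ c₂ * ‖x‖ ^ 2)
    (ℓ : H →L[ℝ] ℝ) (u₁ u₂ : H)
    (h₁ : ∀ w : H, B₁ u₁ w = ℓ w)
    (h₂ : ∀ w : H, B₂ u₂ w = ℓ w)
    (hmono : ∀ v : H, B₁ v v ≤ B₂ v v) :
    ℓ u₂ ≤ ℓ u₁ := by
  have hpos : (0:ℝ) ≤ B₁ (u₁ - u₂) (u₁ - u₂) := by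
    have := hcoer₁ (u₁ - u₂)
    nlinarith [sq_nonneg ‖u₁ - u₂‖]
  have hexp : B₁ (u₁ - u₂) (u₁ - u₂)
      = ℓ u₁ - 2 * ℓ u₂ + B₁ u₂ u₂ := by
    have e1 : B₁ u₁ u₁ = ℓ u₁ := h₁ u₁
    have e2 : B₁ u₁ u₂ = ℓ u₂ := h₁ u₂
    have e3 : B₁ u₂ u₁ = ℓ u₂ := (hsym₁ u₂ u₁).trans e2
    simp only [map_sub, ContinuousLinearMap.sub_apply, e1, e2, e3]
    ring
  have h4 : B₂ u₂ u₂ = ℓ u₂ := h₂ u₂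
  have := hmono u₂
  linarith
end

section
/- If in addition τ(x) ≤ σ(x) for μ-a.e. x, then ∫ τ‖G‖² dμ ≥ ∫ σ‖F‖² dμ. (This is the monotonicity τ ≤ σ ⟹ Λ(τ) ⪰ Λ(σ) of the Neumann-to-Dirichlet map, expressed through its quadratic forms.) -/
open MeasureTheory
open scoped RealInnerProductSpace

/-- If in addition `τ ≤ σ` a.e., then `∫ τ‖G‖² dμ ≥ ∫ σ‖F‖² dμ`
(the monotonicity `τ ≤ σ ⟹ Λ(τ) ⪰ Λ(σ)` of the Neumann-to-Dirichlet map,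
expressed through its quadratic forms). -/
theorem stmt_7
    {X : Type*} [MeasurableSpace X] (μ : Measure X)
    {H : Type*} [NormedAddCommGroup H] [InnerProductSpace ℝ H]
    (F G : X → H)
    (hF : AEStronglyMeasurable F μ) (hG : AEStronglyMeasurable G μ)
    (hF2 : Integrable (fun x => ‖F x‖ ^ 2) μ)
    (hG2 : Integrable (fun x => ‖G x‖ ^ 2) μ)
    (σ τ : X → ℝ) (hσm : Measurable σ) (hτm : Measurable τ)
    (c C : ℝ) (hc : 0 < c) (hcC : c ≤ C)
    (hσb : ∀ᵐ x ∂μ, c ≤ σ x ∧ σ x ≤ C)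
    (hτb : ∀ᵐ x ∂μ, c ≤ τ x ∧ τ x ≤ C)
    (hcross₁ : ∫ x, σ x * ⟪F x, G x⟫ ∂μ = ∫ x, τ x * ‖G x‖ ^ 2 ∂μ)
    (hcross₂ : ∫ x, σ x * ‖F x‖ ^ 2 ∂μ = ∫ x, τ x * ⟪G x, F x⟫ ∂μ)
    (hτσ : ∀ᵐ x ∂μ, τ x ≤ σ x) :
    ∫ x, τ x * ‖G x‖ ^ 2 ∂μ ≥ ∫ x, σ x * ‖F x‖ ^ 2 ∂μ := by
  have hτC : ∀ᵐ x ∂μ, ‖τ x‖ ≤ C := by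
    filter_upwards [hτb] with x hx
    rw [Real.norm_eq_abs, abs_le]; constructor <;> linarith [hx.1, hx.2]
  have hσC : ∀ᵐ x ∂μ, ‖σ x‖ ≤ C := by
    filter_upwards [hσb] with x hx
    rw [Real.norm_eq_abs, abs_le]; constructor <;> linarith [hx.1, hx.2]
  have hiGF : Integrable (fun x => ⟪G x, F x⟫) μ := by
    refine Integrable.mono' (hG2.add hF2) (hG.inner hF) ?_
    filter_upwards with x
    calc ‖⟪G x, F x⟫‖ ≤ ‖G x‖ * ‖F x‖ := norm_inner_le_norm _ _
      _ ≤ ‖G x‖ ^ 2 + ‖F x‖ ^ 2 := by nlinarith [sq_nonneg (‖G x‖ - ‖F x‖)]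
  have iτG2 : Integrable (fun x => τ x * ‖G x‖ ^ 2) μ :=
    hG2.bdd_mul hτm.aestronglyMeasurable hτC
  have iσF2 : Integrable (fun x => σ x * ‖F x‖ ^ 2) μ :=
    hF2.bdd_mul hσm.aestronglyMeasurable hσC
  have iτGF : Integrable (fun x => τ x * ⟪G x, F x⟫) μ :=
    hiGF.bdd_mul hτm.aestronglyMeasurable hτC
  have expand : ∀ x, τ x * ‖G x - F x‖ ^ 2 + (σ x - τ x) * ‖F x‖ ^ 2
      = (τ x * ‖G x‖ ^ 2 - 2 * (τ x * ⟪G x, F x⟫)) + σ x * ‖F x‖ ^ 2 := by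
    intro x
    have h := norm_sub_sq_real (G x) (F x)
    rw [h]; ring
  have key : 0 ≤ ∫ x, (τ x * ‖G x - F x‖ ^ 2 + (σ x - τ x) * ‖F x‖ ^ 2) ∂μ := by
    refine integral_nonneg_of_ae ?_
    filter_upwards [hτb, hτσ] with x hx hxs
    have h1 : 0 ≤ τ x * ‖G x - F x‖ ^ 2 :=
      mul_nonneg (le_trans hc.le hx.1) (sq_nonneg _)
    have h2 : 0 ≤ (σ x - τ x) * ‖F x‖ ^ 2 :=
      mul_nonneg (by linarith) (sq_nonneg _)
    exact add_nonneg h1 h2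
  have hrw : ∫ x, (τ x * ‖G x - F x‖ ^ 2 + (σ x - τ x) * ‖F x‖ ^ 2) ∂μ
      = (∫ x, τ x * ‖G x‖ ^ 2 ∂μ - 2 * ∫ x, τ x * ⟪G x, F x⟫ ∂μ)
        + ∫ x, σ x * ‖F x‖ ^ 2 ∂μ := by
    rw [show (fun x => τ x * ‖G x - F x‖ ^ 2 + (σ x - τ x) * ‖F x‖ ^ 2)
        = fun x => (τ x * ‖G x‖ ^ 2 - 2 * (τ x * ⟪G x, F x⟫)) + σ x * ‖F x‖ ^ 2
      from funext expand]
    rw [integral_add (show Integrable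
        (fun x => τ x * ‖G x‖ ^ 2 - 2 * (τ x * ⟪G x, F x⟫)) μ from
        iτG2.sub (iτGF.const_mul 2)) iσF2,
      integral_sub iτG2 (show Integrable
        (fun x => 2 * (τ x * ⟪G x, F x⟫)) μ from iτGF.const_mul 2),
      integral_const_mul]
  rw [hrw] at key
  linarith [hcross₂, key]
end

section
/- Let D, B ⊆ X be measurable sets with μ(B \ D) = 0, let 0 < σ₀ < σ₁ and 0 < α ≤ σ₁ − σ₀ be real constants, and set σ := σ₀ + (σ₁−σ₀)·1_D and τ := σ₀ + α·1_B. Then under the variational cross-identities, ∫ τ‖G‖² dμ ≥ ∫ σ‖F‖² dμ. (This is the 'if' direction of the standard monotonicity test: B ⊆ D̄ implies Λ(σ₀+αχ_B) ⪰ Λ(σ).) -/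
open MeasureTheory
open scoped RealInnerProductSpace

/-- The 'if' direction of the standard monotonicity test: for measurable sets
`D, B` with `μ(B \ D) = 0`, constants `0 < σ₀ < σ₁`, `0 < α ≤ σ₁ − σ₀`, and
`σ := σ₀ + (σ₁−σ₀)·1_D`, `τ := σ₀ + α·1_B`, the variational cross-identities imply
`∫ τ‖G‖² dμ ≥ ∫ σ‖F‖² dμ` (i.e. `B ⊆ D̄` implies `Λ(σ₀+αχ_B) ⪰ Λ(σ)`). -/
theorem stmt_8
    {X : Type*} [MeasurableSpace X] (μ : Measure X)
    {H : Type*} [NormedAddCommGroup H] [InnerProductSpace ℝ H]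
    (F G : X → H)
    (hF : AEStronglyMeasurable F μ) (hG : AEStronglyMeasurable G μ)
    (hF2 : Integrable (fun x => ‖F x‖ ^ 2) μ)
    (hG2 : Integrable (fun x => ‖G x‖ ^ 2) μ)
    (D B : Set X) (hD : MeasurableSet D) (hB : MeasurableSet B)
    (hBD : μ (B \ D) = 0)
    (σ₀ σ₁ α : ℝ) (hσ₀ : 0 < σ₀) (hσ₀₁ : σ₀ < σ₁)
    (hα : 0 < α) (hα' : α ≤ σ₁ - σ₀)
    (σ τ : X → ℝ)
    (hσdef : σ = fun x => σ₀ + (σ₁ - σ₀) * D.indicator (1 : X → ℝ) x)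
    (hτdef : τ = fun x => σ₀ + α * B.indicator (1 : X → ℝ) x)
    (hcross₁ : ∫ x, σ x * ⟪F x, G x⟫ ∂μ = ∫ x, τ x * ‖G x‖ ^ 2 ∂μ)
    (hcross₂ : ∫ x, σ x * ‖F x‖ ^ 2 ∂μ = ∫ x, τ x * ⟪G x, F x⟫ ∂μ) :
    ∫ x, τ x * ‖G x‖ ^ 2 ∂μ ≥ ∫ x, σ x * ‖F x‖ ^ 2 ∂μ := by

  -- Measurability and bounds for σ and τ
  have hσm : AEStronglyMeasurable σ μ := by
    rw [hσdef]
    exact (aestronglyMeasurable_const.add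
      (aestronglyMeasurable_const.mul
        ((stronglyMeasurable_const.indicator hD).aestronglyMeasurable)))
  have hτm : AEStronglyMeasurable τ μ := by
    rw [hτdef]
    exact (aestronglyMeasurable_const.add
      (aestronglyMeasurable_const.mul
        ((stronglyMeasurable_const.indicator hB).aestronglyMeasurable)))
  have hσbd : ∀ x, ‖σ x‖ ≤ σ₁ := by
    intro x
    rw [hσdef, Real.norm_eq_abs, abs_le]
    by_cases hx : x ∈ D
    · simp only [Set.indicator_of_mem hx, Pi.one_apply, mul_one]
      constructor <;> linarith
    · simp only [Set.indicator_of_notMem hx, mul_zero, add_zero]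
      constructor <;> linarith
  have hτbd : ∀ x, ‖τ x‖ ≤ σ₀ + α := by
    intro x
    rw [hτdef, Real.norm_eq_abs, abs_le]
    by_cases hx : x ∈ B
    · simp only [Set.indicator_of_mem hx, Pi.one_apply, mul_one]
      constructor <;> linarith
    · simp only [Set.indicator_of_notMem hx, mul_zero, add_zero]
      constructor <;> linarith
  have hτ0 : ∀ x, 0 ≤ τ x := by
    intro x
    rw [hτdef]
    by_cases hx : x ∈ B
    · simp only [Set.indicator_of_mem hx, Pi.one_apply, mul_one]; linarith
    · simp only [Set.indicator_of_notMem hx, mul_zero, add_zero]; linarith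
  -- Integrability
  have hGF : Integrable (fun x => ⟪G x, F x⟫) μ := by
    refine (hG2.add hF2).mono' (hG.inner hF) ?_
    filter_upwards with x
    simp only [Pi.add_apply]
    have h1 : ‖⟪G x, F x⟫‖ ≤ ‖G x‖ * ‖F x‖ := norm_inner_le_norm _ _
    have h2 : ‖G x‖ * ‖F x‖ ≤ ‖G x‖ ^ 2 + ‖F x‖ ^ 2 := by nlinarith [norm_nonneg (G x), norm_nonneg (F x)]
    calc ‖⟪G x, F x⟫‖ ≤ ‖G x‖ ^ 2 + ‖F x‖ ^ 2 := le_trans h1 h2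
      _ = ‖G x‖ ^ 2 + ‖F x‖ ^ 2 := rfl
  have h1 : Integrable (fun x => τ x * ‖G x‖ ^ 2) μ :=
    hG2.bdd_mul hτm (Filter.Eventually.of_forall hτbd)
  have h2 : Integrable (fun x => τ x * ⟪G x, F x⟫) μ :=
    hGF.bdd_mul hτm (Filter.Eventually.of_forall hτbd)
  have h3 : Integrable (fun x => σ x * ‖F x‖ ^ 2) μ :=
    hF2.bdd_mul hσm (Filter.Eventually.of_forall hσbd)
  have h4 : Integrable (fun x => τ x * ‖F x‖ ^ 2) μ :=
    hF2.bdd_mul hτm (Filter.Eventually.of_forall hτbd)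
  -- Pointwise identity
  have hpt : ∀ x, τ x * ‖G x - F x‖ ^ 2 + (σ x - τ x) * ‖F x‖ ^ 2
      = (τ x * ‖G x‖ ^ 2 - 2 * (τ x * ⟪G x, F x⟫)) + σ x * ‖F x‖ ^ 2 := by
    intro x
    have h := @norm_sub_sq_real H _ _ (G x) (F x)
    rw [h]; ring
  -- Integral identity
  have hint : ∫ x, (τ x * ‖G x - F x‖ ^ 2 + (σ x - τ x) * ‖F x‖ ^ 2) ∂μ
      = ∫ x, τ x * ‖G x‖ ^ 2 ∂μ - 2 * ∫ x, τ x * ⟪G x, F x⟫ ∂μ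
        + ∫ x, σ x * ‖F x‖ ^ 2 ∂μ := by
    simp_rw [hpt]
    have h2' : Integrable (fun x => 2 * (τ x * ⟪G x, F x⟫)) μ := h2.const_mul 2
    have h12 : Integrable (fun x => τ x * ‖G x‖ ^ 2 - 2 * (τ x * ⟪G x, F x⟫)) μ :=
      h1.sub h2'
    rw [integral_add h12 h3, integral_sub h1 h2', integral_const_mul]
  -- Nonnegativity of the integrand a.e.
  have hcompl : ∀ᵐ x ∂μ, x ∉ B \ D := by
    rw [ae_iff]
    simp only [not_not]; exact hBD
  have hnn : 0 ≤ ∫ x, (τ x * ‖G x - F x‖ ^ 2 + (σ x - τ x) * ‖F x‖ ^ 2) ∂μ := by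
    refine integral_nonneg_of_ae ?_
    filter_upwards [hcompl] with x hx
    have hστ : 0 ≤ σ x - τ x := by
      rw [hσdef, hτdef]
      by_cases hxD : x ∈ D
      · by_cases hxB : x ∈ B
        · simp only [Set.indicator_of_mem hxD, Set.indicator_of_mem hxB,
            Pi.one_apply, mul_one]
          linarith
        · simp only [Set.indicator_of_mem hxD, Set.indicator_of_notMem hxB,
            Pi.one_apply, mul_one, mul_zero, add_zero]
          linarith
      · have hxB : x ∉ B := fun h => hx ⟨h, hxD⟩
        simp only [Set.indicator_of_notMem hxD, Set.indicator_of_notMem hxB,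
          mul_zero, add_zero]
        linarith
    have := hτ0 x
    positivity
  linarith [hint ▸ hnn, hcross₂]
end
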